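/- Let k be a field, n ≥ 1 and x an n×n matrix over k. Then the map l_x : k^{n−1} → k[t] defined by l_x(v) = charpoly(u(v)·x) − charpoly(x) is k-linear, i.e. l_x(v + v') = l_x(v) + l_x(v') and l_x(c·v) = c·l_x(v) for all v, v' ∈ k^{n−1} and c ∈ k. -/

import Mathlib

open Matrix Polynomial

/-- For `v = (v_1, …, v_{n-1}) ∈ k^{n-1}` (here `v j` represents `v_{j+1}` for
`j : Fin (n-1)`), `uPos v` is the `n×n` matrix equal to the identity except that its
first row is `(1, v_1, …, v_{n-1})`; these matrices form the unipotent radical `U_Q`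
of the mirabolic subgroup of `GL_n`. -/
def uPos {k : Type*} [CommRing k] {n : ℕ} (v : Fin (n - 1) → k) :
    Matrix (Fin n) (Fin n) k :=
  Matrix.of fun i j =>
    if i = j then 1
    else if (i : ℕ) = 0 then
      (if h : 1 ≤ (j : ℕ) then v ⟨(j : ℕ) - 1, by have := j.isLt; omega⟩ else 0)
    else 0

section aux
variable {k : Type*} [Field k] {n : ℕ}

def rowv (v : Fin (n - 1) → k) : Fin n → k :=
  fun j => if h : 1 ≤ (j : ℕ) then v ⟨(j : ℕ) - 1, by have := j.isLt; omega⟩ else 0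

lemma rowv_add (v v' : Fin (n - 1) → k) : rowv (v + v') = rowv v + rowv v' := by
  funext j; simp only [rowv, Pi.add_apply]; split <;> simp

lemma rowv_smul (c : k) (v : Fin (n - 1) → k) : rowv (c • v) = c • rowv v := by
  funext j; simp only [rowv, Pi.smul_apply, smul_eq_mul]; split <;> simp

lemma uPos_apply (v : Fin (n - 1) → k) (i l : Fin n) :
    uPos v i l = (if i = l then 1 else 0) + (if (i : ℕ) = 0 then rowv v l else 0) := by
  simp only [uPos, rowv, of_apply]
  rcases eq_or_ne i l with h | h
  · subst h
    rcases eq_or_ne (i : ℕ) 0 with h0 | h0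
    · have : ¬ (1 ≤ (i : ℕ)) := by omega
      simp [h0, this]
    · simp [h0]
  · simp only [if_neg h]
    rcases eq_or_ne (i : ℕ) 0 with h0 | h0 <;> simp [h0]

lemma uPos_mul (v : Fin (n - 1) → k) (x : Matrix (Fin n) (Fin n) k) :
    uPos v * x = x + Matrix.of (fun i j : Fin n =>
      if (i : ℕ) = 0 then ∑ l, rowv v l * x l j else 0) := by
  ext i j
  simp only [mul_apply, uPos_apply, add_mul, Finset.sum_add_distrib, ite_mul, one_mul,
    zero_mul, Matrix.add_apply, of_apply]
  congr 1
  · simp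
  · by_cases h0 : (i : ℕ) = 0 <;> simp [h0]

noncomputable def Dmat (x : Matrix (Fin n) (Fin n) k) (hn : 1 ≤ n)
    (v : Fin (n - 1) → k) : Matrix (Fin n) (Fin n) k[X] :=
  (charmatrix x).updateRow ⟨0, hn⟩ (fun j => -C (∑ l, rowv v l * x l j))

lemma charpoly_uPos_mul (x : Matrix (Fin n) (Fin n) k) (hn : 1 ≤ n)
    (v : Fin (n - 1) → k) :
    (uPos v * x).charpoly = x.charpoly + (Dmat x hn v).det := by
  have hc : charmatrix (uPos v * x) =
      (charmatrix x).updateRow ⟨0, hn⟩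
        ((charmatrix x ⟨0, hn⟩) + fun j => -C (∑ l, rowv v l * x l j)) := by
    ext i j
    rw [updateRow_apply]
    by_cases hi : i = (⟨0, hn⟩ : Fin n)
    · subst hi
      simp only [charmatrix, uPos_mul, Matrix.sub_apply, RingHom.mapMatrix_apply, map_apply,
        Matrix.add_apply, of_apply, Pi.add_apply, map_add, if_pos rfl, if_true, ite_true]
      simp
      ring
    · simp only [charmatrix, uPos_mul, Matrix.sub_apply, RingHom.mapMatrix_apply, map_apply,
        Matrix.add_apply, of_apply, if_neg hi]
      have h0 : (i : ℕ) ≠ 0 := by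
        intro h; exact hi (Fin.ext h)
      simp [h0]
  rw [Matrix.charpoly, hc, det_updateRow_add, updateRow_eq_self, Matrix.charpoly, Dmat]

lemma Dmat_add (x : Matrix (Fin n) (Fin n) k) (hn : 1 ≤ n) (v v' : Fin (n - 1) → k) :
    (Dmat x hn (v + v')).det = (Dmat x hn v).det + (Dmat x hn v').det := by
  have : (fun j => -C (∑ l, rowv (v + v') l * x l j)) =
      (fun j => -C (∑ l, rowv v l * x l j)) + (fun j => -C (∑ l, rowv v' l * x l j)) := by
    funext j
    simp [rowv_add, add_mul, Finset.sum_add_distrib]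
    ring
  simp only [Dmat, this, det_updateRow_add]

lemma Dmat_smul (x : Matrix (Fin n) (Fin n) k) (hn : 1 ≤ n) (c : k) (v : Fin (n - 1) → k) :
    (Dmat x hn (c • v)).det = C c * (Dmat x hn v).det := by
  have : (fun j => -C (∑ l, rowv (c • v) l * x l j)) =
      C c • (fun j => -C (∑ l, rowv v l * x l j)) := by
    funext j
    simp [rowv_smul, mul_assoc, Finset.mul_sum]
  simp only [Dmat, this, det_updateRow_smul, smul_eq_mul]

end aux

/-- Let `k` be a field, `n ≥ 1` and `x` an `n×n` matrix over `k`.  Then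
the map `l_x : k^{n-1} → k[t]`, `l_x(v) = charpoly(u(v)·x) − charpoly(x)`, is `k`-linear:
it is additive and commutes with scalar multiplication. -/
theorem stmt9 {k : Type*} [Field k] {n : ℕ} (hn : 1 ≤ n)
    (x : Matrix (Fin n) (Fin n) k) :
    (∀ v v' : Fin (n - 1) → k,
      (uPos (v + v') * x).charpoly - x.charpoly =
        ((uPos v * x).charpoly - x.charpoly) + ((uPos v' * x).charpoly - x.charpoly)) ∧
    (∀ (c : k) (v : Fin (n - 1) → k),
      (uPos (c • v) * x).charpoly - x.charpoly =
        c • ((uPos v * x).charpoly - x.charpoly)) := by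
  constructor
  · intro v v'
    simp only [charpoly_uPos_mul x hn, Dmat_add]
    ring
  · intro c v
    simp only [charpoly_uPos_mul x hn, Dmat_smul, smul_eq_C_mul]
    ring
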